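/- Let F be a field of characteristic zero and let L be an n-dimensional filiform Lie algebra over F with n ≥ 4, equipped with a basis e_1, …, e_n satisfying [e_1, e_i] = e_{i+1} for all 2 ≤ i ≤ n−1. Then [e_i, e_{n−1}] = 0 for all i = 3, …, n. -/

import Mathlib

/-- In an `n`-dimensional filiform Lie algebra (`n ≥ 4`) over a field of characteristic
zero with a basis `e₁, …, eₙ` (indexed by `Fin n`, `e_k = b ⟨k-1, _⟩`) satisfying
`⁅e₁, eᵢ⁆ = e_{i+1}` for `2 ≤ i ≤ n - 1`, one has `⁅eᵢ, e_{n-1}⁆ = 0` for all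
`i = 3, …, n`. -/
theorem filiform_bracket_with_second_last_basis_vector
    (F : Type*) [Field F] [CharZero F]
    (L : Type*) [LieRing L] [LieAlgebra F L]
    (n : ℕ) (hn : 4 ≤ n)
    (hfil : ∀ k : ℕ, 1 ≤ k → k ≤ n - 1 →
      Module.finrank F ↥(LieModule.lowerCentralSeries F L L k) = n - k - 1)
    (b : Module.Basis (Fin n) F L)
    (hb : ∀ i : ℕ, ∀ h1 : 1 ≤ i, ∀ h2 : i ≤ n - 2,
      ⁅b ⟨0, by omega⟩, b ⟨i, by omega⟩⁆ = b ⟨i + 1, by omega⟩) :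
    ∀ i : ℕ, ∀ h1 : 3 ≤ i, ∀ h2 : i ≤ n, ⁅b ⟨i - 1, by omega⟩, b ⟨n - 2, by omega⟩⁆ = 0 := by
  have hfd : FiniteDimensional F L := Module.Finite.of_basis b
  -- L^{n-1} = ⊥
  have hbot : LieModule.lowerCentralSeries F L L (n - 1) = ⊥ := by
    have h0 : Module.finrank F ↥(LieModule.lowerCentralSeries F L L (n - 1)) = 0 := by
      rw [hfil (n - 1) (by omega) le_rfl]; omega
    have h1 : (LieModule.lowerCentralSeries F L L (n - 1)).toSubmodule = ⊥ :=
      Submodule.finrank_eq_zero.mp h0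
    ext x
    simp only [LieSubmodule.mem_bot]
    constructor
    · intro hx
      have : x ∈ (LieModule.lowerCentralSeries F L L (n - 1)).toSubmodule := hx
      rw [h1] at this
      simpa using this
    · rintro rfl; exact (LieModule.lowerCentralSeries F L L (n - 1)).zero_mem
  -- membership of e_k in L^{k-2}
  have hmem : ∀ k : ℕ, ∀ hk2 : 2 ≤ k, ∀ hkn : k ≤ n,
      b ⟨k - 1, by omega⟩ ∈ LieModule.lowerCentralSeries F L L (k - 2) := by
    intro k
    induction k with
    | zero => intro h; omega
    | succ m ih =>
      intro hk2 hkn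
      rcases Nat.lt_or_ge m 2 with hm | hm
      · interval_cases m
        · omega
        · -- k = 2, L^0 = ⊤
          simp
      · -- k = m+1, m ≥ 2; e_{m+1} = ⁅e₁, e_m⁆ with e_m ∈ L^{m-2}
        have hmn : m ≤ n := by omega
        have hprev := ih hm hmn
        have hbr := hb (m - 1) (by omega) (by omega)
        have hidx1 : (⟨m - 1 + 1, by omega⟩ : Fin n) = ⟨m + 1 - 1, by omega⟩ := by
          apply Fin.ext; simp; omega
        have hidx2 : (⟨m - 1, by omega⟩ : Fin n) = ⟨m - 1, by omega⟩ := rfl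
        rw [hidx1] at hbr
        rw [← hbr]
        have hsucc : m + 1 - 2 = (m - 2) + 1 := by omega
        rw [hsucc, LieModule.lowerCentralSeries_succ]
        exact LieSubmodule.lie_mem_lie (LieSubmodule.mem_top _) hprev
  -- anything bracketed with an element of L^{n-2} is zero
  have hkill : ∀ x : L, ∀ m : L, m ∈ LieModule.lowerCentralSeries F L L (n - 2) →
      ⁅x, m⁆ = 0 := by
    intro x m hm
    have : ⁅x, m⁆ ∈ LieModule.lowerCentralSeries F L L (n - 2 + 1) := by
      rw [LieModule.lowerCentralSeries_succ]
      exact LieSubmodule.lie_mem_lie (LieSubmodule.mem_top _) hm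
    have heq : n - 2 + 1 = n - 1 := by omega
    rw [heq, hbot, LieSubmodule.mem_bot] at this
    exact this
  -- key facts
  have hen1 : b ⟨n - 2, by omega⟩ ∈ LieModule.lowerCentralSeries F L L (n - 3) := by
    have h := hmem (n - 1) (by omega) (by omega)
    have e2 : n - 1 - 2 = n - 3 := by omega
    rw [e2] at h
    have e1 : (⟨n - 1 - 1, by omega⟩ : Fin n) = ⟨n - 2, by omega⟩ := Fin.mk_eq_mk.mpr (by omega)
    rw [e1] at h
    exact h
  have hen : b ⟨n - 1, by omega⟩ ∈ LieModule.lowerCentralSeries F L L (n - 2) := by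
    have := hmem n (by omega) le_rfl
    rwa [show n - 2 = n - 2 from rfl] at this
  -- main argument
  intro i h1 h2
  -- write e_i = ⁅e₁, e_{i-1}⁆
  have hbr := hb (i - 2) (by omega) (by omega)
  have hidx : (⟨i - 2 + 1, by omega⟩ : Fin n) = ⟨i - 1, by omega⟩ := Fin.ext (by simp; omega)
  rw [hidx] at hbr
  rw [← hbr, lie_lie]
  -- first term: ⁅e₁, ⁅e_{i-2}, e_{n-1}⁆⁆
  have hterm1 : ⁅b ⟨0, by omega⟩, ⁅b ⟨i - 2, by omega⟩, b ⟨n - 2, by omega⟩⁆⁆ = (0 : L) := by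
    apply hkill
    have : ⁅b ⟨i - 2, by omega⟩, b ⟨n - 2, by omega⟩⁆ ∈
        LieModule.lowerCentralSeries F L L (n - 3 + 1) := by
      rw [LieModule.lowerCentralSeries_succ]
      exact LieSubmodule.lie_mem_lie (LieSubmodule.mem_top _) hen1
    rwa [show n - 3 + 1 = n - 2 by omega] at this
  have hbr2 := hb (n - 2) (by omega) le_rfl
  have hterm2 : ⁅b ⟨i - 2, by omega⟩, ⁅b ⟨0, by omega⟩, b ⟨n - 2, by omega⟩⁆⁆ = (0 : L) := by
    rw [hbr2]
    exact hkill _ _ (by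
      rwa [show (⟨n - 2 + 1, by omega⟩ : Fin n) = ⟨n - 1, by omega⟩ from Fin.mk_eq_mk.mpr (by omega)])
  rw [hterm1, hterm2, sub_zero]
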